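/- With the same hypotheses and notation as in the previous construction (sequences (d_k), (n_k), and f^{(r)} = (a_{i,r})), for every n ∈ ℕ one has ∑_{i=1}^n a_{i,r} w_{1+n-i} ≤ 3; hence sup_{n∈ℕ} ∑_{i=1}^n a_{i,r} w_{1+n-i} ≤ 3. -/

import Mathlib

open Filter

lemma rev_sum (f : ℕ → ℝ) (a b n : ℕ) (hb : b ≤ n) :
    ∑ i ∈ Finset.Ico a b, f (n - 1 - i) = ∑ j ∈ Finset.Ico (n - b) (n - a), f j := by
  apply Finset.sum_nbij' (fun i => n - 1 - i) (fun j => n - 1 - j)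
  · intro i hi; simp only [Finset.mem_Ico] at *; omega
  · intro j hj; simp only [Finset.mem_Ico] at *; omega
  · intro i hi; simp only [Finset.mem_Ico] at hi; omega
  · intro j hj; simp only [Finset.mem_Ico] at hj; omega
  · intro i hi; rfl

lemma shift_sum_le (w : ℕ → ℝ) (hw : Antitone w) (s t m : ℕ) (hts : t ≤ s) :
    ∑ j ∈ Finset.Ico s (s + m), w j ≤ ∑ j ∈ Finset.Ico t (t + m), w j := by
  rw [Finset.sum_Ico_eq_sum_range, Finset.sum_Ico_eq_sum_range]
  simp only [Nat.add_sub_cancel_left]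
  exact Finset.sum_le_sum fun j _ => hw (by omega)

lemma sum_cuts (f : ℕ → ℝ) (c : ℕ → ℕ) (hc : Monotone c) (h0 : c 0 = 0) (r : ℕ) :
    ∑ i ∈ Finset.range (c r), f i
      = ∑ k ∈ Finset.range r, ∑ i ∈ Finset.Ico (c k) (c (k+1)), f i := by
  induction r with
  | zero => simp [h0]
  | succ r ih =>
    rw [Finset.sum_range_succ, ← ih, Finset.range_eq_Ico, Finset.range_eq_Ico]
    exact (Finset.sum_Ico_consecutive f (Nat.zero_le (c r)) (hc (Nat.le_succ r))).symm

theorem stmt_10 (w : ℕ → ℝ) (h0 : ∀ i, 0 ≤ w i) (hw : Antitone w)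
    (hlim : Tendsto w atTop (nhds 0))
    (hdiv : ¬ Summable w)
    (d : ℕ → ℕ) (hd0 : d 0 = 0) (hdmono : StrictMono d)
    (nseq : ℕ → ℕ) (hn : ∀ k, nseq k = ∑ j ∈ Finset.range (k + 1), d j)
    (hd1 : ∀ k : ℕ, 1 ≤ k →
      (∑ i ∈ Finset.range (nseq (k - 1)), w i)
        ≤ (∑ i ∈ Finset.range (d k), w i) / 2)
    (hd2 : ∀ k : ℕ, 1 ≤ k →
      (∑ i ∈ Finset.range (d (k - 1) + d k), w i) - (∑ i ∈ Finset.range (d k), w i)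
        ≤ (2 : ℝ) ^ (1 - (k : ℤ)) * ∑ i ∈ Finset.range (d (k - 1)), w i)
    (a : ℕ → ℕ → ℝ)
    (ha : ∀ r k i : ℕ, 1 ≤ k → k ≤ r → nseq (k - 1) ≤ i → i < nseq k →
      a r i = 1 / ∑ j ∈ Finset.range (d k), w j)
    (ha0 : ∀ r i : ℕ, nseq r ≤ i → a r i = 0)
    (r : ℕ) :
    (∀ n : ℕ, ∑ i ∈ Finset.range n, a r i * w (n - 1 - i) ≤ 3) ∧
      (⨆ n : ℕ, ∑ i ∈ Finset.range n, a r i * w (n - 1 - i)) ≤ 3 := by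
  -- basic facts
  have hwpos : ∀ i, 0 < w i := by
    intro i
    rcases lt_or_eq_of_le (h0 i) with h | h
    · exact h
    exfalso; apply hdiv
    apply summable_of_ne_finset_zero (s := Finset.range (i + 1))
    intro j hj
    have hij : i ≤ j := by simp only [Finset.mem_range] at hj; omega
    have h1 : w j ≤ w i := hw hij
    have h2 := h0 j
    linarith [h.symm ▸ h1]
  have hWpos : ∀ m, 1 ≤ m → 0 < ∑ i ∈ Finset.range m, w i := by
    intro m hm
    apply Finset.sum_pos (fun i _ => hwpos i)
    exact Finset.nonempty_range_iff.mpr (by omega)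
  have hWmono : Monotone fun m => ∑ i ∈ Finset.range m, w i := by
    intro s t hst
    exact Finset.sum_le_sum_of_subset_of_nonneg (Finset.range_subset_range.mpr hst)
      (fun i _ _ => h0 i)
  have hdpos : ∀ k, 1 ≤ k → 1 ≤ d k := by
    intro k hk
    have := hdmono (show 0 < k from hk)
    omega
  have hnstep : ∀ k, nseq (k + 1) = nseq k + d (k + 1) := by
    intro k
    rw [hn, hn, Finset.sum_range_succ]
  have hnmono : Monotone nseq := by
    apply monotone_nat_of_le_succ
    intro k; rw [hnstep]; omega
  have hn0 : nseq 0 = 0 := by rw [hn]; simpa using hd0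
  have key : ∀ n : ℕ, ∑ i ∈ Finset.range n, a r i * w (n - 1 - i) ≤ 3 := by
    intro n
    set f : ℕ → ℝ := fun i => a r i * w (n - 1 - i) with hf
    have hcmono : Monotone (fun k => min (nseq k) n) := fun s t hst =>
      min_le_min (hnmono hst) le_rfl
    have hc0 : min (nseq 0) n = 0 := by simp [hn0]
    -- split off the zero tail
    have hsplit : ∑ i ∈ Finset.range n, f i
        = ∑ i ∈ Finset.range (min (nseq r) n), f i := by
      rw [Finset.range_eq_Ico,
        ← Finset.sum_Ico_consecutive f (Nat.zero_le (min (nseq r) n))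
          (min_le_right (nseq r) n)]
      have hz : ∑ i ∈ Finset.Ico (min (nseq r) n) n, f i = 0 := by
        apply Finset.sum_eq_zero
        intro i hi
        simp only [Finset.mem_Ico] at hi
        have hir : nseq r ≤ i := by omega
        simp [f, ha0 r i hir]
      rw [hz, add_zero, Finset.range_eq_Ico]
    rw [hsplit, sum_cuts f (fun k => min (nseq k) n) hcmono hc0 r]
    -- per-block bound
    have hblock : ∀ k ∈ Finset.range r,
        ∑ i ∈ Finset.Ico (min (nseq k) n) (min (nseq (k + 1)) n), f i
          ≤ (if nseq k < n ∧ n < nseq (k + 2) then (1 : ℝ)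
              else (1 / 2 : ℝ) ^ (k + 1)) := by
      intro k hk
      have hkr : k + 1 ≤ r := by simpa using hk
      have hBnonneg : (0 : ℝ) ≤ (if nseq k < n ∧ n < nseq (k + 2) then (1 : ℝ)
          else (1 / 2 : ℝ) ^ (k + 1)) := by split <;> positivity
      have hmono1 : nseq k ≤ nseq (k + 1) := hnmono (by omega)
      have hmono2 : nseq (k + 1) ≤ nseq (k + 2) := hnmono (by omega)
      by_cases hnk : n ≤ nseq k
      · -- empty block
        rw [Finset.Ico_eq_empty (by omega)]
        simpa using hBnonneg
      push_neg at hnk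
      have hck : min (nseq k) n = nseq k := by omega
      obtain ⟨u, hu⟩ : ∃ u, min (nseq (k + 1)) n = u := ⟨_, rfl⟩
      have hun : u ≤ n := by omega
      have huk : u ≤ nseq (k + 1) := by omega
      have hku : nseq k ≤ u := by omega
      rw [hck, hu]
      set Wd : ℝ := ∑ j ∈ Finset.range (d (k + 1)), w j with hWd
      have hWdpos : 0 < Wd := hWpos _ (hdpos _ (by omega))
      have hval : ∑ i ∈ Finset.Ico (nseq k) u, f i
          = (∑ j ∈ Finset.Ico (n - u) (n - nseq k), w j) / Wd := by
        have hcongr : ∀ i ∈ Finset.Ico (nseq k) u, f i = w (n - 1 - i) / Wd := by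
          intro i hi
          simp only [Finset.mem_Ico] at hi
          have hai := ha r (k + 1) i (by omega) hkr (by simpa using hi.1) (by omega)
          simp [f, hai, div_eq_inv_mul, Wd]
        rw [Finset.sum_congr rfl hcongr, ← Finset.sum_div,
          rev_sum w (nseq k) u n hun]
      rw [hval, div_le_iff₀ hWdpos]
      by_cases hgood : nseq (k + 2) ≤ n
      · -- full block, geometric bound
        rw [if_neg (by omega)]
        have hueq : u = nseq (k + 1) := by omega
        have h1 : nseq (k + 1) = nseq k + d (k + 1) := hnstep k
        have h2 : nseq (k + 2) = nseq (k + 1) + d (k + 2) := hnstep (k + 1)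
        have hshift : ∑ j ∈ Finset.Ico (n - u) (n - nseq k), w j
            ≤ ∑ j ∈ Finset.Ico (d (k + 2)) (d (k + 2) + d (k + 1)), w j := by
          have e1 : n - nseq k = (n - u) + d (k + 1) := by omega
          rw [e1]
          exact shift_sum_le w hw (n - u) (d (k + 2)) (d (k + 1)) (by omega)
        have hIco : ∑ j ∈ Finset.Ico (d (k + 2)) (d (k + 2) + d (k + 1)), w j
            = (∑ j ∈ Finset.range (d (k + 1) + d (k + 2)), w j)
              - ∑ j ∈ Finset.range (d (k + 2)), w j := by
          rw [Finset.sum_Ico_eq_sub w (by omega), Nat.add_comm]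
        have hgeo := hd2 (k + 2) (by omega)
        have hidx : k + 2 - 1 = k + 1 := by omega
        rw [hidx] at hgeo
        have hpow : (2 : ℝ) ^ (1 - ((k + 2 : ℕ) : ℤ)) = (1 / 2 : ℝ) ^ (k + 1) := by
          have he : (1 - ((k + 2 : ℕ) : ℤ)) = -((k + 1 : ℕ) : ℤ) := by push_cast; ring
          rw [he, zpow_neg, zpow_natCast, ← inv_pow, one_div]
        rw [hpow] at hgeo
        calc ∑ j ∈ Finset.Ico (n - u) (n - nseq k), w j
            ≤ (∑ j ∈ Finset.range (d (k + 1) + d (k + 2)), w j)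
              - ∑ j ∈ Finset.range (d (k + 2)), w j := by rw [← hIco]; exact hshift
          _ ≤ (1 / 2 : ℝ) ^ (k + 1) * Wd := hgeo
      · -- partial block, bound by 1
        have h1 : nseq (k + 1) = nseq k + d (k + 1) := hnstep k
        rw [if_pos ⟨hnk, by omega⟩, one_mul]
        have e1 : n - nseq k = (n - u) + (u - nseq k) := by omega
        calc ∑ j ∈ Finset.Ico (n - u) (n - nseq k), w j
            ≤ ∑ j ∈ Finset.Ico 0 (0 + (u - nseq k)), w j := by
              rw [e1]; exact shift_sum_le w hw (n - u) 0 (u - nseq k) (by omega)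
          _ = ∑ j ∈ Finset.range (u - nseq k), w j := by
              rw [Nat.zero_add, ← Finset.range_eq_Ico]
          _ ≤ Wd := hWmono (by omega)
    refine le_trans (Finset.sum_le_sum hblock) ?_
    -- sum of the bounds is at most 3
    have hBle : ∀ k ∈ Finset.range r,
        (if nseq k < n ∧ n < nseq (k + 2) then (1 : ℝ) else (1 / 2 : ℝ) ^ (k + 1))
          ≤ (1 / 2 : ℝ) ^ (k + 1)
            + (if nseq k < n ∧ n < nseq (k + 2) then (1 : ℝ) else 0) := by
      intro k _
      split
      · have : (0:ℝ) ≤ (1/2:ℝ)^(k+1) := by positivity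
        linarith
      · simp
    refine le_trans (Finset.sum_le_sum hBle) ?_
    rw [Finset.sum_add_distrib]
    have hgeosum : ∑ k ∈ Finset.range r, (1 / 2 : ℝ) ^ (k + 1) ≤ 1 := by
      calc ∑ k ∈ Finset.range r, (1 / 2 : ℝ) ^ (k + 1)
          = (1 / 2 : ℝ) * ∑ k ∈ Finset.range r, (1 / 2 : ℝ) ^ k := by
            rw [Finset.mul_sum]; exact Finset.sum_congr rfl fun k _ => by ring
        _ ≤ (1 / 2 : ℝ) * 2 := by
            have := sum_geometric_two_le r
            linarith
        _ = 1 := by norm_num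
    have hcard : ∑ k ∈ Finset.range r,
        (if nseq k < n ∧ n < nseq (k + 2) then (1 : ℝ) else 0) ≤ 2 := by
      rw [Finset.sum_boole]
      set s := Finset.filter (fun k => nseq k < n ∧ n < nseq (k + 2)) (Finset.range r)
        with hs
      rcases Finset.eq_empty_or_nonempty s with he | hne
      · rw [he]; norm_num
      have hm := Finset.min'_mem s hne
      have hsub : s ⊆ Finset.Icc (s.min' hne) (s.min' hne + 1) := by
        intro k hk
        simp only [Finset.mem_Icc]
        refine ⟨Finset.min'_le s k hk, ?_⟩
        by_contra hlt
        push_neg at hlt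
        have hk' : nseq k < n := (Finset.mem_filter.mp hk).2.1
        have hmn : n < nseq (s.min' hne + 2) := (Finset.mem_filter.mp hm).2.2
        have : nseq (s.min' hne + 2) ≤ nseq k := hnmono (by omega)
        omega
      have hc2 : s.card ≤ 2 := by
        have := Finset.card_le_card hsub
        rwa [Nat.card_Icc, show s.min' hne + 1 + 1 - s.min' hne = 2 by omega] at this
      calc (s.card : ℝ) ≤ (2 : ℕ) := by exact_mod_cast hc2
        _ = 2 := by norm_num
    linarith
  exact ⟨key, ciSup_le key⟩
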